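/- Let (L_•, ψ) be an n-expansion Lie algebra, let i ≥ 1, let ι : V_[n] → L_1 be the inverse of the isomorphism induced by ψ, and define the i-multilinear map ψ_i : V_[n]^i → L_i by ψ_i(v_1,…,v_i) := [ι(v_1),[ι(v_2),[…,[ι(v_{i−1}),ι(v_i)]…]]] (and ψ_1 := ι). Then for every F2-linear functional λ : L_i → F2, the multilinear map λ ∘ ψ_i belongs to Cons(V_[n], i). -/

import Mathlib

abbrev F2 := ZMod 2

namespace HigherGenus

abbrev V (ι : Type) := ι → F2

abbrev ML (ι : Type) (i : ℕ) := MultilinearMap F2 (fun _ : Fin i => V ι) F2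

variable {ι : Type} [Fintype ι] [DecidableEq ι]

/-- The tensor product of a family of linear functionals, as a multilinear map. -/
noncomputable def funcTensor {i : ℕ} (L : Fin i → (V ι →ₗ[F2] F2)) : ML ι i :=
  (MultilinearMap.mkPiAlgebra F2 (Fin i) F2).compLinearMap L

/-- `χ_{h 1} ⊗ ⋯ ⊗ χ_{h i}` as a multilinear map. -/
noncomputable def chiTensor (i : ℕ) (h : Fin i → ι) : ML ι i :=
  funcTensor (fun p => LinearMap.proj (h p))

/-- The governing tensor `φ_{(A,x)}`: the sum of `χ_{τ(1)}⊗⋯⊗χ_{τ(i)}` over all bijections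
`τ : [i] ≃ A` placing `x` in one of the last two positions. -/
noncomputable def govTensor (i : ℕ) (A : Finset ι) (x : ι) : ML ι i :=
  ∑ τ : Fin i ≃ {a // a ∈ A},
    if ∀ p : Fin i, ((τ p : ι) = x → i ≤ (p : ℕ) + 2) then
      chiTensor i (fun p => (τ p : ι)) else 0

/-- `Gov(V_B, i)`: the span of the governing tensors supported in `B`. -/
noncomputable def Gov (i : ℕ) (B : Finset ι) : Submodule F2 (ML ι i) :=
  Submodule.span F2
    {φ | ∃ A : Finset ι, ∃ x : ι, A ⊆ B ∧ A.card = i ∧ x ∈ A ∧ φ = govTensor i A x}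

/-- `Multi~(V_B, i)`: the span of the injective pure tensors supported in `B`. -/
noncomputable def MultiT (i : ℕ) (B : Finset ι) : Submodule F2 (ML ι i) :=
  Submodule.span F2
    {φ | ∃ τ : Fin i → ι, Function.Injective τ ∧ (∀ p, τ p ∈ B) ∧ φ = chiTensor i τ}

/-- Evaluation of a multilinear map at a fixed tuple, as a linear map. -/
def mEval {i : ℕ} (σ : Fin i → V ι) : ML ι i →ₗ[F2] F2 where
  toFun b := b σ
  map_add' _ _ := rfl
  map_smul' _ _ := rfl

/-- Plugging the vector `v` into the first slot of a multilinear map. -/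
noncomputable def consMapL {i : ℕ} (v : V ι) : ML ι (i + 1) →ₗ[F2] ML ι i :=
  (LinearMap.applyₗ v).comp
    (multilinearCurryLeftEquiv F2 (fun _ : Fin (i + 1) => V ι) F2).toLinearMap

/-- The standard basis vector `e_j`. -/
def stdb (j : ι) : V ι := Pi.single j 1

/-- The recursively defined subspaces `Cons(V_B, i)`. -/
noncomputable def Cons : (i : ℕ) → Finset ι → Submodule F2 (ML ι i)
  | 0, _ => ⊥
  | 1, B => Gov 1 B
  | 2, B => MultiT 2 B ⊓
      (⨅ σ : Fin 2 → V ι, LinearMap.ker (mEval σ - mEval (σ ∘ (Equiv.swap 0 1))))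
  | 3, B => (MultiT 3 B ⊓
      (⨅ j ∈ B, Submodule.comap (consMapL (stdb j)) (Cons 2 (B.erase j)))) ⊓
      (⨅ j₁ : ι, ⨅ j₂ : ι, ⨅ j₃ : ι,
        LinearMap.ker (mEval ![stdb j₁, stdb j₂, stdb j₃]
          + mEval ![stdb j₃, stdb j₁, stdb j₂] + mEval ![stdb j₂, stdb j₃, stdb j₁]))
  | (i+4), B => (MultiT (i+4) B ⊓
      (⨅ j ∈ B, Submodule.comap (consMapL (stdb j)) (Cons (i+3) (B.erase j)))) ⊓
      (⨅ j₁ : ι, ⨅ j₂ : ι, ⨅ _ : j₁ ≠ j₂,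
        LinearMap.ker ((consMapL (stdb j₂)).comp (consMapL (stdb j₁))
          - (consMapL (stdb j₁)).comp (consMapL (stdb j₂))))


/-- The right-nested bracket `[σ_1,[σ_2,[…,[σ_{i−1},σ_i]…]]]`. -/
def nest {L : Type} [AddCommGroup L] [Module F2 L]
    (br : L →ₗ[F2] L →ₗ[F2] L) : {i : ℕ} → (Fin i → L) → L
  | 0, _ => 0
  | 1, σ => σ 0
  | (_+2), σ => br (σ 0) (nest br (Fin.tail σ))

/-- `(L_•, ψ)` (presented by a bracket `br`, graded pieces `piece m` for `m ≥ 1` with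
`piece 0 = ⊥`, and `ψ`) is an expansion Lie algebra over the index set `ι`. -/
structure IsExpLie {ι : Type} [Fintype ι] [DecidableEq ι] {L : Type}
    [AddCommGroup L] [Module F2 L]
    (br : L →ₗ[F2] L →ₗ[F2] L) (piece : ℕ → Submodule F2 L)
    (ψ : L →ₗ[F2] V ι) : Prop where
  /-- the grading starts in degree 1 -/
  piece_zero : piece 0 = ⊥
  /-- the graded pieces are independent … -/
  indep : iSupIndep piece
  /-- … and give a direct sum decomposition of `L` -/
  span_top : (⨆ m, piece m) = ⊤
  /-- `[L_h, L_k] ⊆ L_{h+k}` -/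
  graded : ∀ h k : ℕ, ∀ x ∈ piece h, ∀ y ∈ piece k, br x y ∈ piece (h + k)
  /-- the bracket is alternating -/
  br_self : ∀ x, br x x = 0
  /-- the Jacobi identity -/
  jacobi : ∀ x y z, br x (br y z) + br y (br z x) + br z (br x y) = 0
  /-- `ψ` is surjective -/
  psi_surj : Function.Surjective ψ
  /-- `ψ` is a homomorphism of graded Lie algebras: it kills brackets
  (the target has the zero bracket) … -/
  psi_br : ∀ x y, ψ (br x y) = 0
  /-- … and it kills every graded piece of degree `≠ 1`
  (the target is concentrated in degree 1) -/
  psi_graded : ∀ m : ℕ, m ≠ 1 → ∀ x ∈ piece m, ψ x = 0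
  /-- `ker ψ` is an abelian subalgebra -/
  ker_abelian : ∀ x y, ψ x = 0 → ψ y = 0 → br x y = 0
  /-- `[L_•, L_•] = ker ψ` -/
  comm_eq_ker : Submodule.span F2 {z | ∃ x y, z = br x y} = LinearMap.ker ψ
  /-- for `i ≥ 4`, nested brackets with entries in `L_1` are unchanged under any permutation
  of the first `i − 2` entries -/
  perm_invariant : ∀ (m : ℕ) (σ : Fin (m + 4) → L), (∀ p, σ p ∈ piece 1) →
    ∀ e : Equiv.Perm (Fin (m + 4)), (∀ p : Fin (m + 4), m + 2 ≤ (p : ℕ) → e p = p) →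
    nest br (σ ∘ e) = nest br σ
  /-- for `i ≥ 4`, nested brackets with entries in `L_1` vanish as soon as two of the first
  `i − 2` entries coincide -/
  repeat_vanish : ∀ (m : ℕ) (σ : Fin (m + 4) → L), (∀ p, σ p ∈ piece 1) →
    (∃ s t : Fin (m + 4), s ≠ t ∧ (s : ℕ) < m + 2 ∧ (t : ℕ) < m + 2 ∧ σ s = σ t) →
    nest br σ = 0
  /-- `[τ_1,[τ_1,τ_2]] = 0` for `τ_1, τ_2 ∈ L_1` with `ψ(τ_1)` a standard basis vector -/
  basis_bracket_sq : ∀ x y : L, x ∈ piece 1 → y ∈ piece 1 →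
    (∃ j : ι, ψ x = stdb j) → br x (br x y) = 0

/-- A bundled expansion Lie algebra over the index set `ι`. -/
structure ExpLieAlg (ι : Type) [Fintype ι] [DecidableEq ι] where
  L : Type
  [acg : AddCommGroup L]
  [mod : Module F2 L]
  br : L →ₗ[F2] L →ₗ[F2] L
  piece : ℕ → Submodule F2 L
  psi : L →ₗ[F2] V ι
  isexp : IsExpLie br piece psi

attribute [instance] ExpLieAlg.acg ExpLieAlg.mod

/-- A homomorphism of expansion Lie algebras: a linear map commuting with the brackets,
preserving the gradings, and compatible with the structure maps `ψ`. -/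
def IsExpLieHom {ι : Type} [Fintype ι] [DecidableEq ι] (E E' : ExpLieAlg ι)
    (f : E.L →ₗ[F2] E'.L) : Prop :=
  (∀ x y, f (E.br x y) = E'.br (f x) (f y)) ∧
  (∀ m : ℕ, ∀ x ∈ E.piece m, f x ∈ E'.piece m) ∧
  (∀ x, E'.psi (f x) = E.psi x)


/-! ### Auxiliary lemmas -/

section Aux

variable {ι : Type} [Fintype ι] [DecidableEq ι]

lemma chiTensor_apply (i : ℕ) (h : Fin i → ι) (σ : Fin i → V ι) :
    chiTensor i h σ = ∏ p, σ p (h p) := by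
  simp [chiTensor, funcTensor]

lemma chiTensor_apply_basis (i : ℕ) (τ h : Fin i → ι) :
    chiTensor i τ (fun p => stdb (h p)) = if τ = h then 1 else 0 := by
  rw [chiTensor_apply]
  by_cases hth : τ = h
  · subst hth
    simp [stdb, Pi.single_apply]
  · rw [if_neg hth]
    obtain ⟨p, hp⟩ := Function.ne_iff.mp hth
    apply Finset.prod_eq_zero (Finset.mem_univ p)
    simp [stdb, Pi.single_apply, hp]

lemma ml_expand (i : ℕ) (b : ML ι i) :
    b = ∑ h : Fin i → ι, b (fun p => stdb (h p)) • chiTensor i h := by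
  apply Module.Basis.ext_multilinear (fun _ => Pi.basisFun F2 ι)
  intro v
  have hbf : ∀ j, (Pi.basisFun F2 ι) j = stdb j := by
    intro j; ext k; simp [stdb, Pi.basisFun_apply]
  simp only [hbf]
  rw [show (∑ h : Fin i → ι, b (fun p => stdb (h p)) • chiTensor i h) (fun p => stdb (v p))
      = mEval (fun p => stdb (v p)) (∑ h : Fin i → ι, b (fun p => stdb (h p)) • chiTensor i h)
      from rfl]
  rw [map_sum]
  simp only [map_smul, smul_eq_mul]
  simp only [show ∀ (h : Fin i → ι), (mEval fun p => stdb (v p)) (chiTensor i h)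
      = if h = v then 1 else 0 from fun h => chiTensor_apply_basis i h v]
  simp

lemma multiT_of_coeffs (i : ℕ) (B : Finset ι) (b : ML ι i)
    (H : ∀ h : Fin i → ι, ¬ (Function.Injective h ∧ ∀ p, h p ∈ B) →
      b (fun p => stdb (h p)) = 0) :
    b ∈ MultiT i B := by
  rw [ml_expand i b]
  apply Submodule.sum_mem
  intro h _
  by_cases hgood : Function.Injective h ∧ ∀ p, h p ∈ B
  · exact Submodule.smul_mem _ _
      (Submodule.subset_span ⟨h, hgood.1, hgood.2, rfl⟩)
  · rw [H h hgood, zero_smul]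
    exact Submodule.zero_mem _

lemma chiTensor_one (h : Fin 1 → ι) : chiTensor 1 h = chiTensor 1 (fun _ => h 0) := by
  congr 1
  funext p
  rw [Subsingleton.elim p 0]

lemma govTensor_one (x : ι) : govTensor 1 ({x} : Finset ι) x = chiTensor 1 (fun _ => x) := by
  haveI hu : Unique {a // a ∈ ({x} : Finset ι)} :=
    ⟨⟨⟨x, Finset.mem_singleton_self x⟩⟩, fun a => Subtype.ext (Finset.mem_singleton.mp a.2)⟩
  haveI : Unique (Fin 1 ≃ {a // a ∈ ({x} : Finset ι)}) :=
    ⟨⟨Equiv.ofUnique _ _⟩, fun e => Equiv.ext fun p => Subsingleton.elim _ _⟩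
  rw [govTensor, Fintype.sum_unique]
  rw [if_pos (by intro p _; omega)]
  congr 1
  funext p
  exact Finset.mem_singleton.mp
    (((default : Fin 1 ≃ {a // a ∈ ({x} : Finset ι)}) p).2)

lemma chiTensor_mem_gov_one (h : Fin 1 → ι) (B : Finset ι) (hB : h 0 ∈ B) :
    chiTensor 1 h ∈ Gov 1 B := by
  rw [chiTensor_one, ← govTensor_one]
  exact Submodule.subset_span ⟨{h 0}, h 0, by simpa using hB, by simp, by simp, rfl⟩

lemma nest_succ {L : Type} [AddCommGroup L] [Module F2 L] (br : L →ₗ[F2] L →ₗ[F2] L)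
    {i : ℕ} (σ : Fin (i + 2) → L) : nest br σ = br (σ 0) (nest br (Fin.tail σ)) := rfl

lemma nest_one {L : Type} [AddCommGroup L] [Module F2 L] (br : L →ₗ[F2] L →ₗ[F2] L)
    (σ : Fin 1 → L) : nest br σ = σ 0 := rfl

lemma nest_two {L : Type} [AddCommGroup L] [Module F2 L] (br : L →ₗ[F2] L →ₗ[F2] L)
    (σ : Fin 2 → L) : nest br σ = br (σ 0) (σ 1) := rfl

lemma nest_three {L : Type} [AddCommGroup L] [Module F2 L] (br : L →ₗ[F2] L →ₗ[F2] L)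
    (σ : Fin 3 → L) : nest br σ = br (σ 0) (br (σ 1) (σ 2)) := rfl

lemma add_self_f2 {L : Type} [AddCommGroup L] [Module F2 L] (a : L) : a + a = 0 := by
  have h : (2 : F2) • a = 0 := by
    rw [show (2 : F2) = 0 from rfl, zero_smul]
  rwa [two_smul] at h

lemma consMapL_apply {i : ℕ} (v : V ι) (b : ML ι (i + 1)) (σ : Fin i → V ι) :
    consMapL v b σ = b (Fin.cons v σ) := rfl

lemma cons_comp {X Y : Type} (f : X → Y) {k : ℕ} (v : X) (σ : Fin k → X) :
    (fun p : Fin (k + 1) => f ((Fin.cons v σ : Fin (k + 1) → X) p))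
      = Fin.cons (f v) (fun p => f (σ p)) := by
  funext p
  induction p using Fin.cases <;> simp

lemma cons_cons_swap {X : Type} {k : ℕ} (a b : X) (σ : Fin k → X) :
    (Fin.cons a (Fin.cons b σ) : Fin (k + 2) → X) ∘ (Equiv.swap 0 1)
      = Fin.cons b (Fin.cons a σ) := by
  funext p
  induction p using Fin.cases with
  | zero => simp
  | succ q =>
    induction q using Fin.cases with
    | zero =>
      simp [Function.comp, show ((0 : Fin (k+1)).succ : Fin (k + 2)) = 1 from rfl]
    | succ r =>
      have h0 : (r.succ.succ : Fin (k + 2)) ≠ 0 := Fin.succ_ne_zero _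
      have h1 : (r.succ.succ : Fin (k + 2)) ≠ 1 := by
        intro hc
        exact Fin.succ_ne_zero r (Fin.succ_injective _ hc)
      simp [Function.comp, Equiv.swap_apply_of_ne_of_ne h0 h1]

section ExpLie

variable {n : ℕ} (E : ExpLieAlg (Fin n))

lemma br_symm (x y : E.L) : E.br x y = E.br y x := by
  have h : E.br x y + E.br y x = 0 := by
    have h0 := E.isexp.br_self (x + y)
    simpa [map_add, E.isexp.br_self, add_assoc, add_comm, add_left_comm] using h0
  calc E.br x y = E.br x y + (E.br y x + E.br y x) := by rw [add_self_f2, add_zero]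
    _ = (E.br x y + E.br y x) + E.br y x := by abel
    _ = E.br y x := by rw [h, zero_add]

lemma nest_mem (i : ℕ) (σ : Fin (i + 1) → E.L) (h : ∀ p, σ p ∈ E.piece 1) :
    nest E.br σ ∈ E.piece (i + 1) := by
  induction i with
  | zero => exact h 0
  | succ k ih =>
    rw [nest_succ]
    have hg := E.isexp.graded 1 (k + 1) (σ 0) (h 0) _ (ih (Fin.tail σ) (fun p => h p.succ))
    rwa [Nat.add_comm] at hg

lemma nest_repeat_zero :
    ∀ (i : ℕ) (σ : Fin i → E.L), (∀ p, σ p ∈ E.piece 1) →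
    (∀ p, ∃ j, E.psi (σ p) = stdb j) →
    ∀ s t : Fin i, s ≠ t → σ s = σ t → nest E.br σ = 0 := by
  intro i
  induction i using Nat.strong_induction_on with
  | _ i IH =>
  rcases i with _ | _ | _ | _ | m
  · intro σ _ _ s; exact absurd s.2 (by omega)
  · intro σ _ _ s t hst _; exact absurd (Fin.ext (by omega)) hst
  · -- i = 2
    intro σ h1 h2 s t hst heq
    rw [nest_two]
    have h01 : σ 0 = σ 1 := by
      have hs2 := s.isLt; have ht2 := t.isLt
      have hs' : s = 0 ∨ s = 1 := by
        rcases (by omega : (s : ℕ) = 0 ∨ (s : ℕ) = 1) with h | h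
        exacts [Or.inl (Fin.ext h), Or.inr (Fin.ext h)]
      have ht' : t = 0 ∨ t = 1 := by
        rcases (by omega : (t : ℕ) = 0 ∨ (t : ℕ) = 1) with h | h
        exacts [Or.inl (Fin.ext h), Or.inr (Fin.ext h)]
      rcases hs' with rfl | rfl <;> rcases ht' with rfl | rfl <;>
        first | exact heq | exact heq.symm | exact absurd rfl hst
    rw [h01]
    exact E.isexp.br_self _
  · -- i = 3
    intro σ h1 h2 s t hst heq
    rw [nest_three]
    have bsq : ∀ (a b : Fin 3), E.br (σ a) (E.br (σ a) (σ b)) = 0 := by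
      intro a b
      exact E.isexp.basis_bracket_sq (σ a) (σ b) (h1 a) (h1 b) (h2 a)
    have key : ∀ s t : Fin 3, s ≠ t → σ s = σ t →
        E.br (σ 0) (E.br (σ 1) (σ 2)) = 0 := by
      intro s t hst heq
      have hs3 := s.isLt; have ht3 := t.isLt
      have hs' : s = 0 ∨ s = 1 ∨ s = 2 := by
        rcases (by omega : (s : ℕ) = 0 ∨ (s : ℕ) = 1 ∨ (s : ℕ) = 2) with h | h | h
        exacts [Or.inl (Fin.ext h), Or.inr (Or.inl (Fin.ext h)), Or.inr (Or.inr (Fin.ext h))]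
      have ht' : t = 0 ∨ t = 1 ∨ t = 2 := by
        rcases (by omega : (t : ℕ) = 0 ∨ (t : ℕ) = 1 ∨ (t : ℕ) = 2) with h | h | h
        exacts [Or.inl (Fin.ext h), Or.inr (Or.inl (Fin.ext h)), Or.inr (Or.inr (Fin.ext h))]
      rcases hs' with rfl | rfl | rfl <;> rcases ht' with rfl | rfl | rfl
      · exact absurd rfl hst
      · rw [show σ 1 = σ 0 from heq.symm]; exact bsq 0 2
      · rw [show σ 2 = σ 0 from heq.symm, br_symm E (σ 1) (σ 0)]; exact bsq 0 1
      · rw [show σ 1 = σ 0 from heq]; exact bsq 0 2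
      · exact absurd rfl hst
      · rw [show σ 2 = σ 1 from heq.symm, E.isexp.br_self]; exact map_zero _
      · rw [show σ 2 = σ 0 from heq, br_symm E (σ 1) (σ 0)]; exact bsq 0 1
      · rw [show σ 2 = σ 1 from heq, E.isexp.br_self]; exact map_zero _
      · exact absurd rfl hst
    exact key s t hst heq
  · -- i = m + 4
    intro σ h1 h2 s t hst heq
    have step : ∀ (σ : Fin (m + 4) → E.L), (∀ p, σ p ∈ E.piece 1) →
        (∀ p, ∃ j, E.psi (σ p) = stdb j) →
        ∀ s t : Fin (m + 4), s ≠ t → σ s = σ t → s ≠ 0 → t ≠ 0 →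
        nest E.br σ = 0 := by
      intro σ h1 h2 s t hst heq hs0 ht0
      rw [nest_succ]
      have htail : nest E.br (Fin.tail σ) = 0 := by
        apply IH (m + 3) (by omega) (Fin.tail σ) (fun p => h1 p.succ) (fun p => h2 p.succ)
          (s.pred hs0) (t.pred ht0)
        · intro hc
          apply hst
          have := congrArg Fin.succ hc
          rwa [Fin.succ_pred, Fin.succ_pred] at this
        · show σ (s.pred hs0).succ = σ (t.pred ht0).succ
          rwa [Fin.succ_pred, Fin.succ_pred]
      rw [htail]
      exact map_zero _
    have core : ∀ t : Fin (m + 4), t ≠ 0 → σ 0 = σ t → nest E.br σ = 0 := by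
      intro t ht0 heq
      by_cases hlt : (t : ℕ) < m + 2
      · exact E.isexp.repeat_vanish m σ h1 ⟨0, t, Ne.symm ht0, by simp, hlt, heq⟩
      · push_neg at hlt
        set e : Equiv.Perm (Fin (m + 4)) := Equiv.swap 0 ⟨m + 1, by omega⟩ with he
        have hfix : ∀ p : Fin (m + 4), m + 2 ≤ (p : ℕ) → e p = p := by
          intro p hp
          apply Equiv.swap_apply_of_ne_of_ne
          · intro hc; rw [hc] at hp; simp at hp
          · intro hc; rw [hc] at hp; simp at hp
        rw [← E.isexp.perm_invariant m σ h1 e hfix]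
        apply step (σ ∘ e) (fun p => h1 _) (fun p => h2 _) ⟨m + 1, by omega⟩ t
        · intro hc
          have := congrArg (fun x : Fin (m + 4) => (x : ℕ)) hc
          simp at this; omega
        · show σ (e ⟨m + 1, by omega⟩) = σ (e t)
          have h1' : e ⟨m + 1, by omega⟩ = 0 := Equiv.swap_apply_right _ _
          have h2' : e t = t := hfix t hlt
          rw [h1', h2']; exact heq
        · intro hc
          have := congrArg (fun x : Fin (m + 4) => (x : ℕ)) hc
          simp at this
        · exact ht0
    by_cases hs0 : s = 0
    · subst hs0; exact core t (Ne.symm hst) heq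
    · by_cases ht0 : t = 0
      · subst ht0; exact core s hs0 heq.symm
      · exact step σ h1 h2 s t hst heq hs0 ht0

end ExpLie

end Aux


section Main

variable {n : ℕ}

lemma nest_cons {L : Type} [AddCommGroup L] [Module F2 L] (br : L →ₗ[F2] L →ₗ[F2] L)
    {k : ℕ} (x : L) (σ : Fin (k + 1) → L) :
    nest br (Fin.cons x σ : Fin (k + 2) → L) = br x (nest br σ) := by
  rw [nest_succ, Fin.cons_zero, Fin.tail_cons]

lemma coeff_vanish (E : ExpLieAlg (Fin n)) (inv : V (Fin n) →ₗ[F2] E.L)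
    (hinv1 : ∀ v, inv v ∈ E.piece 1) (hinv2 : ∀ v, E.psi (inv v) = v)
    {i : ℕ} {lam : ↥(E.piece i) →ₗ[F2] F2} {b : ML (Fin n) i}
    (hb : ∀ (σ : Fin i → V (Fin n)) (z : ↥(E.piece i)),
      (z : E.L) = nest E.br (fun p => inv (σ p)) → b σ = lam z)
    (h : Fin i → Fin n) (hrep : ¬ Function.Injective h) :
    b (fun p => stdb (h p)) = 0 := by
  obtain ⟨a, c, hac, hne⟩ := Function.not_injective_iff.mp hrep
  have hz : nest E.br (fun p => inv (stdb (h p))) = 0 :=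
    nest_repeat_zero E i _ (fun p => hinv1 _) (fun p => ⟨h p, hinv2 _⟩) a c hne (by rw [hac])
  rw [hb (fun p => stdb (h p)) 0 (by rw [hz]; simp), map_zero]

lemma main_cons (E : ExpLieAlg (Fin n)) (inv : V (Fin n) →ₗ[F2] E.L)
    (hinv1 : ∀ v, inv v ∈ E.piece 1) (hinv2 : ∀ v, E.psi (inv v) = v) :
    ∀ i : ℕ, 1 ≤ i → ∀ (lam : ↥(E.piece i) →ₗ[F2] F2) (b : ML (Fin n) i),
    (∀ (σ : Fin i → V (Fin n)) (z : ↥(E.piece i)),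
      (z : E.L) = nest E.br (fun p => inv (σ p)) → b σ = lam z) →
    ∀ B : Finset (Fin n),
    (∀ h : Fin i → Fin n, (∃ p, h p ∉ B) → b (fun p => stdb (h p)) = 0) →
    b ∈ Cons i B := by
  intro i
  induction i using Nat.strong_induction_on with
  | _ i IH =>
  rcases i with _ | _ | _ | _ | m
  · intro hi; exact absurd hi (by omega)
  · -- i = 1
    intro _ lam b hb B hcoeff
    show b ∈ Gov 1 B
    rw [ml_expand 1 b]
    apply Submodule.sum_mem
    intro h _
    by_cases hB : h 0 ∈ B
    · exact Submodule.smul_mem _ _ (chiTensor_mem_gov_one h B hB)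
    · rw [hcoeff h ⟨0, hB⟩, zero_smul]; exact Submodule.zero_mem _
  · -- i = 2
    intro _ lam b hb B hcoeff
    rw [show Cons 2 B = MultiT 2 B ⊓
      (⨅ σ : Fin 2 → V (Fin n), LinearMap.ker (mEval σ - mEval (σ ∘ (Equiv.swap 0 1))))
      from rfl, Submodule.mem_inf]
    constructor
    · apply multiT_of_coeffs
      intro h hbad
      rcases not_and_or.mp hbad with hinj | hB
      · exact coeff_vanish E inv hinv1 hinv2 hb h hinj
      · push_neg at hB
        exact hcoeff h hB
    · rw [Submodule.mem_iInf]
      intro σ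
      rw [LinearMap.mem_ker, LinearMap.sub_apply]
      have e1 : b σ = lam ⟨_, nest_mem E 1 (fun p => inv (σ p)) (fun p => hinv1 _)⟩ :=
        hb σ _ rfl
      have e2 : b (σ ∘ Equiv.swap 0 1)
          = lam ⟨_, nest_mem E 1 (fun p => inv ((σ ∘ Equiv.swap 0 1) p)) (fun p => hinv1 _)⟩ :=
        hb _ _ rfl
      show b σ - b (σ ∘ Equiv.swap 0 1) = 0
      rw [e1, e2, sub_eq_zero]
      congr 1
      apply Subtype.ext
      show nest E.br _ = nest E.br _
      rw [nest_two, nest_two]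
      show E.br (inv (σ 0)) (inv (σ 1))
        = E.br (inv (σ (Equiv.swap 0 1 0))) (inv (σ (Equiv.swap 0 1 1)))
      rw [Equiv.swap_apply_left, Equiv.swap_apply_right]
      exact br_symm E _ _
  · -- i = 3
    intro _ lam b hb B hcoeff
    refine Submodule.mem_inf.mpr ⟨Submodule.mem_inf.mpr ⟨?_, ?_⟩, ?_⟩
    · -- MultiT 3 B
      apply multiT_of_coeffs
      intro h hbad
      rcases not_and_or.mp hbad with hinj | hB
      · exact coeff_vanish E inv hinv1 hinv2 hb h hinj
      · push_neg at hB
        exact hcoeff h hB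
    · -- recursion
      rw [Submodule.mem_iInf]
      intro j
      rw [Submodule.mem_iInf]
      intro hjB
      rw [Submodule.mem_comap]
      have hres : ∀ z ∈ E.piece 2, E.br (inv (stdb j)) z ∈ E.piece 3 :=
        fun z hz => E.isexp.graded 1 2 _ (hinv1 _) z hz
      apply IH 2 (by omega) (by omega)
        (lam.comp ((E.br (inv (stdb j))).restrict hres)) _ ?_ (B.erase j) ?_
      · -- hb'
        intro σ z' hz'
        rw [consMapL_apply]
        have hval : b (Fin.cons (stdb j) σ)
            = lam ⟨E.br (inv (stdb j)) (z' : E.L), hres _ z'.2⟩ := by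
          apply hb
          show E.br (inv (stdb j)) (z' : E.L) = _
          rw [cons_comp inv (stdb j) σ, nest_cons, hz']
        rw [hval]
        rfl
      · -- coefficients off B.erase j
        intro h hp
        obtain ⟨p, hp⟩ := hp
        rw [consMapL_apply,
          show (Fin.cons (stdb j) (fun q => stdb (h q)) : Fin 3 → V (Fin n))
            = fun q => stdb ((Fin.cons j h : Fin 3 → Fin n) q)
          from (cons_comp stdb j h).symm]
        rw [Finset.mem_erase] at hp
        by_cases hpj : h p = j
        · apply coeff_vanish E inv hinv1 hinv2 hb
          intro hinj
          apply Fin.succ_ne_zero p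
          apply hinj
          show (Fin.cons j h : Fin 3 → Fin n) p.succ = (Fin.cons j h : Fin 3 → Fin n) 0
          rw [Fin.cons_succ, Fin.cons_zero, hpj]
        · have hpB : h p ∉ B := fun hB => hp ⟨hpj, hB⟩
          exact hcoeff _ ⟨p.succ, by rwa [Fin.cons_succ]⟩
    · -- Jacobi
      rw [Submodule.mem_iInf]; intro j₁
      rw [Submodule.mem_iInf]; intro j₂
      rw [Submodule.mem_iInf]; intro j₃
      rw [LinearMap.mem_ker, LinearMap.add_apply, LinearMap.add_apply]
      have t1 : b ![stdb j₁, stdb j₂, stdb j₃]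
          = lam ⟨_, nest_mem E 2 (fun p => inv (![stdb j₁, stdb j₂, stdb j₃] p))
              (fun p => hinv1 _)⟩ := hb _ _ rfl
      have t2 : b ![stdb j₃, stdb j₁, stdb j₂]
          = lam ⟨_, nest_mem E 2 (fun p => inv (![stdb j₃, stdb j₁, stdb j₂] p))
              (fun p => hinv1 _)⟩ := hb _ _ rfl
      have t3 : b ![stdb j₂, stdb j₃, stdb j₁]
          = lam ⟨_, nest_mem E 2 (fun p => inv (![stdb j₂, stdb j₃, stdb j₁] p))
              (fun p => hinv1 _)⟩ := hb _ _ rfl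
      show b ![stdb j₁, stdb j₂, stdb j₃] + b ![stdb j₃, stdb j₁, stdb j₂]
          + b ![stdb j₂, stdb j₃, stdb j₁] = 0
      rw [t1, t2, t3, ← map_add, ← map_add,
        show (⟨_, nest_mem E 2 (fun p => inv (![stdb j₁, stdb j₂, stdb j₃] p))
              (fun p => hinv1 _)⟩
          + ⟨_, nest_mem E 2 (fun p => inv (![stdb j₃, stdb j₁, stdb j₂] p))
              (fun p => hinv1 _)⟩
          + ⟨_, nest_mem E 2 (fun p => inv (![stdb j₂, stdb j₃, stdb j₁] p))
              (fun p => hinv1 _)⟩ : ↥(E.piece 3)) = 0 from ?_, map_zero]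
      apply Subtype.ext
      show nest E.br (fun p => inv (![stdb j₁, stdb j₂, stdb j₃] p))
          + nest E.br (fun p => inv (![stdb j₃, stdb j₁, stdb j₂] p))
          + nest E.br (fun p => inv (![stdb j₂, stdb j₃, stdb j₁] p)) = (0 : E.L)
      rw [nest_three, nest_three, nest_three]
      simp only [Matrix.cons_val_zero, Matrix.cons_val_one, Matrix.head_cons,
        Matrix.cons_val_two, Matrix.tail_cons]
      rw [add_right_comm]
      exact E.isexp.jacobi _ _ _
  · -- i = m + 4
    intro _ lam b hb B hcoeff
    refine Submodule.mem_inf.mpr ⟨Submodule.mem_inf.mpr ⟨?_, ?_⟩, ?_⟩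
    · -- MultiT
      apply multiT_of_coeffs
      intro h hbad
      rcases not_and_or.mp hbad with hinj | hB
      · exact coeff_vanish E inv hinv1 hinv2 hb h hinj
      · push_neg at hB
        exact hcoeff h hB
    · -- recursion
      rw [Submodule.mem_iInf]
      intro j
      rw [Submodule.mem_iInf]
      intro hjB
      rw [Submodule.mem_comap]
      have hres : ∀ z ∈ E.piece (m + 3), E.br (inv (stdb j)) z ∈ E.piece (m + 4) := by
        intro z hz
        have hg := E.isexp.graded 1 (m + 3) (inv (stdb j)) (hinv1 (stdb j)) z hz
        rwa [Nat.add_comm] at hg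
      apply IH (m + 3) (by omega) (by omega)
        (lam.comp ((E.br (inv (stdb j))).restrict hres)) _ ?_ (B.erase j) ?_
      · -- hb'
        intro σ z' hz'
        rw [consMapL_apply]
        have hval : b (Fin.cons (stdb j) σ)
            = lam ⟨E.br (inv (stdb j)) (z' : E.L), hres _ z'.2⟩ := by
          apply hb
          show E.br (inv (stdb j)) (z' : E.L) = _
          rw [cons_comp inv (stdb j) σ, nest_cons, hz']
        rw [hval]
        rfl
      · -- coefficients off B.erase j
        intro h hp
        obtain ⟨p, hp⟩ := hp
        rw [consMapL_apply,
          show (Fin.cons (stdb j) (fun q => stdb (h q)) : Fin (m + 4) → V (Fin n))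
            = fun q => stdb ((Fin.cons j h : Fin (m + 4) → Fin n) q)
          from (cons_comp stdb j h).symm]
        rw [Finset.mem_erase] at hp
        by_cases hpj : h p = j
        · apply coeff_vanish E inv hinv1 hinv2 hb
          intro hinj
          apply Fin.succ_ne_zero p
          apply hinj
          show (Fin.cons j h : Fin (m + 4) → Fin n) p.succ
            = (Fin.cons j h : Fin (m + 4) → Fin n) 0
          rw [Fin.cons_succ, Fin.cons_zero, hpj]
        · have hpB : h p ∉ B := fun hB => hp ⟨hpj, hB⟩
          exact hcoeff _ ⟨p.succ, by rwa [Fin.cons_succ]⟩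
    · -- swap of first two slots
      rw [Submodule.mem_iInf]; intro j₁
      rw [Submodule.mem_iInf]; intro j₂
      rw [Submodule.mem_iInf]; intro hne
      rw [LinearMap.mem_ker, LinearMap.sub_apply, sub_eq_zero]
      refine MultilinearMap.ext fun σ => ?_
      show b (Fin.cons (stdb j₁) (Fin.cons (stdb j₂) σ))
        = b (Fin.cons (stdb j₂) (Fin.cons (stdb j₁) σ))
      have hA := hb (Fin.cons (stdb j₁) (Fin.cons (stdb j₂) σ))
        ⟨_, nest_mem E (m + 3)
          (fun p => inv ((Fin.cons (stdb j₁) (Fin.cons (stdb j₂) σ) : Fin (m + 4) → V (Fin n)) p))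
          (fun p => hinv1 _)⟩ rfl
      have hB' := hb (Fin.cons (stdb j₂) (Fin.cons (stdb j₁) σ))
        ⟨_, nest_mem E (m + 3)
          (fun p => inv ((Fin.cons (stdb j₂) (Fin.cons (stdb j₁) σ) : Fin (m + 4) → V (Fin n)) p))
          (fun p => hinv1 _)⟩ rfl
      rw [hA, hB']
      congr 1
      apply Subtype.ext
      show nest E.br _ = nest E.br _
      have hswap : (Fin.cons (stdb j₂) (Fin.cons (stdb j₁) σ) : Fin (m + 4) → V (Fin n))
          = (Fin.cons (stdb j₁) (Fin.cons (stdb j₂) σ) : Fin (m + 4) → V (Fin n))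
            ∘ (Equiv.swap 0 1) := (cons_cons_swap (stdb j₁) (stdb j₂) σ).symm
      have hfix : ∀ p : Fin (m + 4), m + 2 ≤ (p : ℕ) → (Equiv.swap 0 1 : Equiv.Perm (Fin (m+4))) p = p := by
        intro p hp
        apply Equiv.swap_apply_of_ne_of_ne
        · intro hc; rw [hc] at hp; simp at hp
        · intro hc; rw [hc] at hp; simp at hp
      calc nest E.br (fun p => inv ((Fin.cons (stdb j₁) (Fin.cons (stdb j₂) σ)
              : Fin (m + 4) → V (Fin n)) p))
          = nest E.br ((fun p => inv ((Fin.cons (stdb j₁) (Fin.cons (stdb j₂) σ)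
              : Fin (m + 4) → V (Fin n)) p)) ∘ (Equiv.swap 0 1)) :=
            (E.isexp.perm_invariant m _ (fun p => hinv1 _) _ hfix).symm
        _ = nest E.br (fun p => inv ((Fin.cons (stdb j₂) (Fin.cons (stdb j₁) σ)
              : Fin (m + 4) → V (Fin n)) p)) := by rw [hswap]; rfl

end Main

/-- For an `n`-expansion Lie algebra `(L_•, ψ)`, `i ≥ 1`, `ι` the inverse of the isomorphism
`L_1 ≅ V_[n]` induced by `ψ`, and any linear functional `λ : L_i → F2`, the `i`-multilinear
map `λ ∘ ψ_i`, where `ψ_i (v_1,…,v_i) = [ι v_1,[ι v_2,[…,[ι v_{i−1}, ι v_i]…]]]`, belongs to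
`Cons(V_[n], i)`. -/
theorem statement7 (n : ℕ) (E : ExpLieAlg (Fin n)) (i : ℕ) (hi : 1 ≤ i)
    (inv : V (Fin n) →ₗ[F2] E.L)
    (hinv1 : ∀ v, inv v ∈ E.piece 1) (hinv2 : ∀ v, E.psi (inv v) = v)
    (lam : ↥(E.piece i) →ₗ[F2] F2)
    (b : ML (Fin n) i)
    (hb : ∀ (σ : Fin i → V (Fin n)) (z : ↥(E.piece i)),
      (z : E.L) = nest E.br (fun p => inv (σ p)) → b σ = lam z) :
    b ∈ Cons i Finset.univ := by
  exact main_cons E inv hinv1 hinv2 i hi lam b hb Finset.univ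
    (fun h hp => absurd (Finset.mem_univ _) hp.choose_spec)

end HigherGenus
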